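/- In the setup below, R(P,<,<') is Ehrhart-equivalent to both the order polytope O(P,<) and the chain polytope C(P,<): for every integer m ≥ 0, the three sets ℤ^P ∩ m·R(P,<,<'), ℤ^P ∩ m·O(P,<) and ℤ^P ∩ m·C(P,<) have the same cardinality. -/

import Mathlib

open Pointwise

/-- `J` is an order ideal (lower set) with respect to the strict order relation `r`. -/
def IsLowerIdeal {P : Type*} (r : P → P → Prop) (J : Set P) : Prop :=
  ∀ ⦃p q : P⦄, r p q → q ∈ J → p ∈ J

/-- The set of `r`-maximal elements of `J`. -/
def maxElems {P : Type*} (r : P → P → Prop) (J : Set P) : Set P :=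
  {p ∈ J | ∀ q ∈ J, ¬ r p q}

/-- The 0/1 indicator vector of `A ⊆ P`, as a point of `ℝ^P`. -/
noncomputable def ind {P : Type*} (A : Set P) : P → ℝ :=
  A.indicator 1

/-- The order ideal of `(P, r)` generated by `A`. -/
def genIdeal {P : Type*} (r : P → P → Prop) (A : Set P) : Set P :=
  {p | ∃ q ∈ A, p = q ∨ r p q}

/-- The Hibi–Li operation `J1 *' J2` relative to the order `r`: the order ideal of `(P, r)`
generated by `(J1 ∩ J2) ∩ (max_r J1 ∪ max_r J2)`. -/
def starOp {P : Type*} (r : P → P → Prop) (J1 J2 : Set P) : Set P :=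
  genIdeal r ((J1 ∩ J2) ∩ (maxElems r J1 ∪ maxElems r J2))

/-- The relative poset polytope `R(P, lt, lt')`: the convex hull of the points
`1_{max_{lt'} J}` over all order ideals `J` of `(P, lt)`. -/
noncomputable def RPP {P : Type*} (lt lt' : P → P → Prop) : Set (P → ℝ) :=
  convexHull ℝ {x | ∃ J : Set P, IsLowerIdeal lt J ∧ x = ind (maxElems lt' J)}

/-- The dilation `m·Q = {m·x : x ∈ Q}`. -/
def dilate {P : Type*} (m : ℕ) (Q : Set (P → ℝ)) : Set (P → ℝ) :=
  (fun x => (m : ℝ) • x) '' Q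

/-- The order polytope of `(P, lt)`. -/
def orderPolytope {P : Type*} (lt : P → P → Prop) : Set (P → ℝ) :=
  {x | (∀ p, 0 ≤ x p ∧ x p ≤ 1) ∧ ∀ p q, lt q p → x p ≤ x q}

/-- The chain polytope of `(P, lt)`. -/
def chainPolytope {P : Type*} (lt : P → P → Prop) : Set (P → ℝ) :=
  {x | (∀ p, 0 ≤ x p) ∧ ∀ (k : ℕ) (c : Fin k → P),
    (∀ i j : Fin k, i < j → lt (c i) (c j)) → (∑ i, x (c i)) ≤ 1}


section HibiLi

open Classical Finset

variable {P : Type*} [Fintype P] {lt lt' : P → P → Prop}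

lemma wfUp (hirr : ∀ p, ¬ lt' p p) (htr : ∀ a b c, lt' a b → lt' b c → lt' a c) :
    WellFounded (fun a b : P => lt' b a) := by
  letI : IsTrans P (fun a b : P => lt' b a) := ⟨fun a b c h1 h2 => htr c b a h2 h1⟩
  letI : IsIrrefl P (fun a b : P => lt' b a) := ⟨fun a h => hirr a h⟩
  exact Finite.wellFounded_of_trans_of_irrefl _

noncomputable def tf (lt' : P → P → Prop) (h : WellFounded fun a b : P => lt' b a)
    (y : P → ℤ) : P → ℤ :=
  h.fix (fun p ih =>
    y p + (((Finset.univ.filter (fun q => lt' p q)).attach.sup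
      (fun q => (ih q.1 (by have := q.2; simp only [Finset.mem_filter] at this; exact this.2)).toNat) : ℕ) : ℤ))

lemma tf_spec (h : WellFounded fun a b : P => lt' b a) (y : P → ℤ) (p : P) :
    tf lt' h y p
      = y p + (((Finset.univ.filter (fun q => lt' p q)).sup
          (fun q => (tf lt' h y q).toNat) : ℕ) : ℤ) := by
  conv_lhs => rw [tf, WellFounded.fix_eq]
  show y p + (((Finset.univ.filter (fun q => lt' p q)).attach.sup
      (fun q => (tf lt' h y q.1).toNat) : ℕ) : ℤ) = _
  exact congrArg (fun n : ℕ => y p + (n:ℤ)) (Finset.sup_attach _ (fun q => (tf lt' h y q).toNat))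

variable (h : WellFounded fun a b : P => lt' b a) (y : P → ℤ)

lemma tf_ge (p : P) : y p ≤ tf lt' h y p := by
  rw [tf_spec]; omega

lemma tf_nonneg (hy : ∀ p, 0 ≤ y p) (p : P) : 0 ≤ tf lt' h y p :=
  le_trans (hy p) (tf_ge h y p)

lemma tf_succ (hy : ∀ p, 0 ≤ y p) {p q : P} (hpq : lt' p q) :
    y p + tf lt' h y q ≤ tf lt' h y p := by
  rw [tf_spec h y p]
  have h1 : (tf lt' h y q).toNat ≤ (Finset.univ.filter (fun q => lt' p q)).sup
      (fun q => (tf lt' h y q).toNat) :=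
    Finset.le_sup (f := fun q => (tf lt' h y q).toNat) (Finset.mem_filter.mpr ⟨Finset.mem_univ q, hpq⟩)
  have h2 : tf lt' h y q = ((tf lt' h y q).toNat : ℤ) := (Int.toNat_of_nonneg (tf_nonneg h y hy q)).symm
  omega

lemma tf_cases (hy : ∀ p, 0 ≤ y p) (p : P) :
    (∀ q, lt' p q → tf lt' h y q ≤ tf lt' h y p - y p) ∧
    (tf lt' h y p = y p ∨ ∃ q, lt' p q ∧ tf lt' h y p = y p + tf lt' h y q) := by
  constructor
  · intro q hq
    rw [tf_spec h y p]
    have h1 : (tf lt' h y q).toNat ≤ (Finset.univ.filter (fun q => lt' p q)).sup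
        (fun q => (tf lt' h y q).toNat) := Finset.le_sup (f := fun q => (tf lt' h y q).toNat) (Finset.mem_filter.mpr ⟨Finset.mem_univ q, hq⟩)
    omega
  · rcases Finset.eq_empty_or_nonempty (Finset.univ.filter (fun q => lt' p q)) with he | hne
    · left; rw [tf_spec h y p, he]; simp
    · obtain ⟨q, hq, hq2⟩ := Finset.exists_mem_eq_sup _ hne (fun q => (tf lt' h y q).toNat)
      right
      refine ⟨q, (Finset.mem_filter.mp hq).2, ?_⟩
      rw [tf_spec h y p, hq2, Int.toNat_of_nonneg (tf_nonneg h y hy q)]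

end HibiLi

section HibiLiB

open Classical Finset

variable {P : Type*} [Fintype P] {lt lt' : P → P → Prop}
variable (h : WellFounded fun a b : P => lt' b a) (y : P → ℤ)

lemma mem_maxElems_iff (hy : ∀ p, 0 ≤ y p) (p : P) {i : ℕ} (hi : 1 ≤ i) :
    p ∈ maxElems lt' {q | (i:ℤ) ≤ tf lt' h y q} ↔
      (tf lt' h y p - y p < (i:ℤ) ∧ (i:ℤ) ≤ tf lt' h y p) := by
  obtain ⟨h1, h2⟩ := tf_cases h y hy p
  constructor
  · rintro ⟨hp, hmax⟩
    simp only [Set.mem_setOf_eq] at hp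
    refine ⟨?_, hp⟩
    by_contra hc
    push_neg at hc
    rcases h2 with he | ⟨q, hq, he⟩
    · omega
    · refine absurd hq (hmax q ?_)
      simp only [Set.mem_setOf_eq]
      omega
  · rintro ⟨hlt, hp⟩
    refine ⟨hp, fun q hq hpq => ?_⟩
    have := h1 q hpq
    simp only [Set.mem_setOf_eq] at hq
    omega

lemma decomp (hy : ∀ p, 0 ≤ y p) (m : ℕ) (htf : ∀ p, tf lt' h y p ≤ (m:ℤ)) (p : P) :
    y p = ∑ i ∈ Finset.Icc 1 m,
      (if p ∈ maxElems lt' {q | (i:ℤ) ≤ tf lt' h y q} then (1:ℤ) else 0) := by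
  rw [Finset.sum_boole]
  have key : (Finset.Icc 1 m).filter (fun i : ℕ => p ∈ maxElems lt' {q | (i:ℤ) ≤ tf lt' h y q})
      = Finset.Icc ((tf lt' h y p - y p).toNat + 1) ((tf lt' h y p).toNat) := by
    have h1 := tf_nonneg h y hy p
    have h2 := tf_ge h y p
    have h3 := hy p
    have h4 := htf p
    ext i
    simp only [Finset.mem_filter, Finset.mem_Icc]
    constructor
    · rintro ⟨⟨hi1, him⟩, hmem⟩
      rw [mem_maxElems_iff h y hy p hi1] at hmem
      omega
    · rintro ⟨hi1, hib⟩
      have hi1' : 1 ≤ i := by omega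
      refine ⟨⟨hi1', by omega⟩, (mem_maxElems_iff h y hy p hi1').mpr (by omega)⟩
  rw [key, Nat.card_Icc]
  have h1 := tf_nonneg h y hy p
  have h2 := tf_ge h y p
  have h3 := hy p
  omega

lemma rep_point {ι : Type*} (s : Finset ι) (c : ι → ℝ) (Jf : ι → Set P)
    (hrep : ∀ p, (y p : ℝ) = ∑ i ∈ s, c i * (if p ∈ maxElems lt' (Jf i) then 1 else 0)) (p : P) :
    (y p : ℝ) = ∑ i ∈ s.filter (fun i => p ∈ maxElems lt' (Jf i)), c i := by
  rw [hrep p, Finset.sum_filter]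
  simp [mul_ite]

lemma tf_le_sum {ι : Type*} (hy : ∀ p, 0 ≤ y p)
    (hweak' : ∀ p q, lt' p q → lt p q)
    (s : Finset ι) (c : ι → ℝ) (hc : ∀ i ∈ s, 0 ≤ c i) (Jf : ι → Set P)
    (hJ : ∀ i ∈ s, IsLowerIdeal lt (Jf i))
    (hrep : ∀ p, (y p : ℝ) = ∑ i ∈ s, c i * (if p ∈ maxElems lt' (Jf i) then 1 else 0)) (p : P) :
    (tf lt' h y p : ℝ) ≤ ∑ i ∈ s.filter (fun i => p ∈ Jf i), c i := by
  induction p using WellFounded.induction h with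
  | _ p IH =>
  obtain ⟨-, h2⟩ := tf_cases h y hy p
  have hsub1 : s.filter (fun i => p ∈ maxElems lt' (Jf i)) ⊆ s.filter (fun i => p ∈ Jf i) := by
    intro i hi
    rw [Finset.mem_filter] at hi ⊢
    exact ⟨hi.1, hi.2.1⟩
  rcases h2 with he | ⟨q, hq, he⟩
  · rw [he, rep_point y s c Jf hrep p]
    refine Finset.sum_le_sum_of_subset_of_nonneg hsub1 (fun i hi _ => hc i (Finset.mem_filter.mp hi).1)
  · rw [he]
    push_cast
    have hdisj : Disjoint (s.filter fun i => p ∈ maxElems lt' (Jf i))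
        (s.filter fun i => q ∈ Jf i) := by
      rw [Finset.disjoint_left]
      intro i hi1 hi2
      exact (Finset.mem_filter.mp hi1).2.2 q (Finset.mem_filter.mp hi2).2 hq
    have hsub : (s.filter fun i => p ∈ maxElems lt' (Jf i)) ∪ (s.filter fun i => q ∈ Jf i)
        ⊆ s.filter (fun i => p ∈ Jf i) := by
      intro i hi
      rcases Finset.mem_union.mp hi with hi' | hi'
      · exact hsub1 hi'
      · rw [Finset.mem_filter] at hi' ⊢
        exact ⟨hi'.1, hJ i hi'.1 (hweak' p q hq) hi'.2⟩
    calc (y p : ℝ) + (tf lt' h y q : ℝ)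
        ≤ (∑ i ∈ s.filter (fun i => p ∈ maxElems lt' (Jf i)), c i)
          + ∑ i ∈ s.filter (fun i => q ∈ Jf i), c i :=
          add_le_add (le_of_eq (rep_point y s c Jf hrep p)) (IH q hq)
      _ = ∑ i ∈ (s.filter fun i => p ∈ maxElems lt' (Jf i)) ∪ (s.filter fun i => q ∈ Jf i), c i :=
          (Finset.sum_union hdisj).symm
      _ ≤ ∑ i ∈ s.filter (fun i => p ∈ Jf i), c i :=
          Finset.sum_le_sum_of_subset_of_nonneg hsub (fun i hi _ => hc i (Finset.mem_filter.mp hi).1)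

lemma sum_le_tf {ι : Type*} (hy : ∀ p, 0 ≤ y p)
    (hweak' : ∀ p q, lt' p q → lt p q)
    (s : Finset ι) (c : ι → ℝ) (hc : ∀ i ∈ s, 0 ≤ c i) (Jf : ι → Set P)
    (hJ : ∀ i ∈ s, IsLowerIdeal lt (Jf i))
    (hcomp : ∀ i ∈ s, ∀ j ∈ s, Jf i ⊆ Jf j ∨ Jf j ⊆ Jf i)
    (hrep : ∀ p, (y p : ℝ) = ∑ i ∈ s, c i * (if p ∈ maxElems lt' (Jf i) then 1 else 0)) (p : P) :
    ∑ i ∈ s.filter (fun i => p ∈ Jf i), c i ≤ (tf lt' h y p : ℝ) := by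
  induction p using WellFounded.induction h with
  | _ p IH =>
  by_cases hT : ∀ i ∈ s, p ∈ Jf i → p ∈ maxElems lt' (Jf i)
  · have heq : s.filter (fun i => p ∈ Jf i) = s.filter (fun i => p ∈ maxElems lt' (Jf i)) := by
      ext i
      simp only [Finset.mem_filter]
      exact ⟨fun ⟨hi, hp⟩ => ⟨hi, hT i hi hp⟩, fun ⟨hi, hp⟩ => ⟨hi, hp.1⟩⟩
    rw [heq, ← rep_point y s c Jf hrep p]
    exact_mod_cast tf_ge h y p
  · push_neg at hT
    set T := s.filter (fun i => p ∈ Jf i ∧ p ∉ maxElems lt' (Jf i)) with hTdef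
    have hTne : T.Nonempty := by
      obtain ⟨i, hi, hpJ, hnm⟩ := hT
      exact ⟨i, Finset.mem_filter.mpr ⟨hi, hpJ, hnm⟩⟩
    obtain ⟨i₀, hi₀T, hmin⟩ := Finset.exists_min_image T (fun i => (Jf i).ncard) hTne
    obtain ⟨hi₀s, hpJ₀, hnm₀⟩ := Finset.mem_filter.mp hi₀T |>.imp id id
    obtain ⟨q, hqJ₀, hpq⟩ : ∃ q ∈ Jf i₀, lt' p q := by
      by_contra hcq
      push_neg at hcq
      exact hnm₀ ⟨hpJ₀, fun q hq hpq => hcq q hq hpq⟩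
    have hsubT : ∀ j ∈ T, Jf i₀ ⊆ Jf j := by
      intro j hjT
      rcases hcomp i₀ hi₀s j (Finset.mem_filter.mp hjT).1 with hij | hji
      · exact hij
      · rw [Set.eq_of_subset_of_ncard_le hji (hmin j hjT)]
    have hsplit : s.filter (fun i => p ∈ Jf i)
        = s.filter (fun i => p ∈ maxElems lt' (Jf i)) ∪ T := by
      ext i
      simp only [hTdef, Finset.mem_filter, Finset.mem_union]
      constructor
      · rintro ⟨hi, hp⟩
        by_cases hm : p ∈ maxElems lt' (Jf i)
        · exact Or.inl ⟨hi, hm⟩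
        · exact Or.inr ⟨hi, hp, hm⟩
      · rintro (⟨hi, hp⟩ | ⟨hi, hp, -⟩)
        · exact ⟨hi, hp.1⟩
        · exact ⟨hi, hp⟩
    have hdisj : Disjoint (s.filter fun i => p ∈ maxElems lt' (Jf i)) T := by
      rw [Finset.disjoint_left]
      intro i hi1 hi2
      exact (Finset.mem_filter.mp hi2).2.2 (Finset.mem_filter.mp hi1).2
    have hTsub : T ⊆ s.filter (fun i => q ∈ Jf i) := by
      intro j hjT
      exact Finset.mem_filter.mpr ⟨(Finset.mem_filter.mp hjT).1, hsubT j hjT hqJ₀⟩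
    have hstep : (y p : ℝ) + (tf lt' h y q : ℝ) ≤ (tf lt' h y p : ℝ) := by
      exact_mod_cast tf_succ h y hy hpq
    calc ∑ i ∈ s.filter (fun i => p ∈ Jf i), c i
        = (∑ i ∈ s.filter (fun i => p ∈ maxElems lt' (Jf i)), c i) + ∑ i ∈ T, c i := by
          rw [hsplit, Finset.sum_union hdisj]
      _ ≤ (y p : ℝ) + ∑ i ∈ s.filter (fun i => q ∈ Jf i), c i := by
          refine add_le_add (le_of_eq (rep_point y s c Jf hrep p).symm) ?_
          exact Finset.sum_le_sum_of_subset_of_nonneg hTsub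
            (fun i hi _ => hc i (Finset.mem_filter.mp hi).1)
      _ ≤ (y p : ℝ) + (tf lt' h y q : ℝ) := add_le_add (le_refl _) (IH q hpq)
      _ ≤ (tf lt' h y p : ℝ) := hstep

end HibiLiB

section HibiLiC

open Classical Finset

variable {P : Type*} {lt lt' : P → P → Prop}

lemma maxElems_subset {J : Set P} : maxElems lt' J ⊆ J := fun _ hp => hp.1

lemma mem_maxElems {J : Set P} {p : P} :
    p ∈ maxElems lt' J ↔ p ∈ J ∧ ∀ q ∈ J, ¬ lt' p q := Iff.rfl

lemma exists_above {J : Set P} {p : P} (hp : p ∈ J) (hnm : p ∉ maxElems lt' J) :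
    ∃ q ∈ J, lt' p q := by
  by_contra hc
  push_neg at hc
  exact hnm ⟨hp, fun q hq hpq => hc q hq hpq⟩

lemma isLowerIdeal_union {J1 J2 : Set P} (h1 : IsLowerIdeal lt J1) (h2 : IsLowerIdeal lt J2) :
    IsLowerIdeal lt (J1 ∪ J2) := by
  rintro p q hpq (hq | hq)
  · exact Or.inl (h1 hpq hq)
  · exact Or.inr (h2 hpq hq)

lemma lowerIdeal_weak (hweak : ∀ p q, lt' p q → lt p q) {J : Set P}
    (h1 : IsLowerIdeal lt J) : IsLowerIdeal lt' J :=
  fun p q hpq hq => h1 (hweak p q hpq) hq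

lemma subset_genIdeal {A : Set P} : A ⊆ genIdeal lt' A :=
  fun p hp => ⟨p, hp, Or.inl rfl⟩

lemma genIdeal_subset {A J : Set P} (hAJ : A ⊆ J) (hJ : IsLowerIdeal lt' J) :
    genIdeal lt' A ⊆ J := by
  rintro p ⟨q, hq, rfl | hpq⟩
  · exact hAJ hq
  · exact hJ hpq (hAJ hq)

lemma starOp_subset (hweak : ∀ p q, lt' p q → lt p q) {J1 J2 : Set P}
    (h1 : IsLowerIdeal lt J1) (h2 : IsLowerIdeal lt J2) :
    starOp lt' J1 J2 ⊆ J1 ∩ J2 := by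
  refine genIdeal_subset (fun p hp => hp.1) ?_
  intro p q hpq hq
  exact ⟨lowerIdeal_weak hweak h1 hpq hq.1, lowerIdeal_weak hweak h2 hpq hq.2⟩

lemma starOp_comm (J1 J2 : Set P) : starOp lt' J1 J2 = starOp lt' J2 J1 := by
  unfold starOp
  rw [Set.inter_comm J1 J2, Set.union_comm (maxElems lt' J1)]

/-- Case: `p ∈ M1`, `p ∉ M2`. -/
lemma star_case2 (hweak : ∀ p q, lt' p q → lt p q) {J1 J2 : Set P}
    (h1 : IsLowerIdeal lt J1) (h2 : IsLowerIdeal lt J2) {p : P}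
    (hM1 : p ∈ maxElems lt' J1) (hM2 : p ∉ maxElems lt' J2) :
    (p ∈ J2 → p ∉ maxElems lt' (J1 ∪ J2) ∧ p ∈ maxElems lt' (starOp lt' J1 J2)) ∧
    (p ∉ J2 → p ∈ maxElems lt' (J1 ∪ J2) ∧ p ∉ maxElems lt' (starOp lt' J1 J2)) := by
  constructor
  · intro hpJ2
    obtain ⟨q, hqJ2, hpq⟩ := exists_above hpJ2 hM2
    constructor
    · intro hMU
      exact hMU.2 q (Or.inr hqJ2) hpq
    · refine ⟨subset_genIdeal ⟨⟨hM1.1, hpJ2⟩, Or.inl hM1⟩, ?_⟩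
      intro q' hq' hpq'
      exact hM1.2 q' (starOp_subset hweak h1 h2 hq').1 hpq'
  · intro hpJ2
    constructor
    · refine ⟨Or.inl hM1.1, ?_⟩
      rintro q (hq | hq) hpq
      · exact hM1.2 q hq hpq
      · exact hpJ2 (h2 (hweak p q hpq) hq)
    · intro hMS
      obtain ⟨r, hrA, hr⟩ := hMS.1
      rcases hr with rfl | hpr
      · exact hpJ2 hrA.1.2
      · exact hM1.2 r hrA.1.1 hpr

lemma star_identity (hweak : ∀ p q, lt' p q → lt p q) {J1 J2 : Set P}
    (h1 : IsLowerIdeal lt J1) (h2 : IsLowerIdeal lt J2) (p : P) :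
    (if p ∈ maxElems lt' J1 then (1:ℝ) else 0) + (if p ∈ maxElems lt' J2 then 1 else 0)
      = (if p ∈ maxElems lt' (J1 ∪ J2) then 1 else 0)
        + (if p ∈ maxElems lt' (starOp lt' J1 J2) then 1 else 0) := by
  by_cases hM1 : p ∈ maxElems lt' J1 <;> by_cases hM2 : p ∈ maxElems lt' J2
  · -- both maximal
    have hMU : p ∈ maxElems lt' (J1 ∪ J2) := by
      refine ⟨Or.inl hM1.1, ?_⟩
      rintro q (hq | hq) hpq
      · exact hM1.2 q hq hpq
      · exact hM2.2 q hq hpq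
    have hMS : p ∈ maxElems lt' (starOp lt' J1 J2) := by
      refine ⟨subset_genIdeal ⟨⟨hM1.1, hM2.1⟩, Or.inl hM1⟩, ?_⟩
      intro q hq hpq
      exact hM1.2 q (starOp_subset hweak h1 h2 hq).1 hpq
    simp [hM1, hM2, hMU, hMS]
  · by_cases hpJ2 : p ∈ J2
    · obtain ⟨hU, hS⟩ := (star_case2 hweak h1 h2 hM1 hM2).1 hpJ2
      simp [hM1, hM2, hU, hS]
    · obtain ⟨hU, hS⟩ := (star_case2 hweak h1 h2 hM1 hM2).2 hpJ2
      simp [hM1, hM2, hU, hS]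
  · rw [Set.union_comm, starOp_comm]
    by_cases hpJ1 : p ∈ J1
    · obtain ⟨hU, hS⟩ := (star_case2 hweak h2 h1 hM2 hM1).1 hpJ1
      simp [hM1, hM2, hU, hS]
    · obtain ⟨hU, hS⟩ := (star_case2 hweak h2 h1 hM2 hM1).2 hpJ1
      simp [hM1, hM2, hU, hS]
  · -- neither maximal
    have hMU : p ∉ maxElems lt' (J1 ∪ J2) := by
      intro hMU
      rcases hMU.1 with hp | hp
      · obtain ⟨q, hq, hpq⟩ := exists_above hp hM1
        exact hMU.2 q (Or.inl hq) hpq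
      · obtain ⟨q, hq, hpq⟩ := exists_above hp hM2
        exact hMU.2 q (Or.inr hq) hpq
    have hMS : p ∉ maxElems lt' (starOp lt' J1 J2) := by
      intro hMS
      obtain ⟨r, hrA, hr⟩ := hMS.1
      rcases hr with rfl | hpr
      · rcases hrA.2 with hr | hr
        · exact hM1 hr
        · exact hM2 hr
      · exact hMS.2 r (subset_genIdeal hrA) hpr
    simp [hM1, hM2, hMU, hMS]

end HibiLiC

section HibiLiD

open Classical Finset

variable {P : Type*} [Fintype P] {lt lt' : P → P → Prop}

lemma ind_apply (J : Set P) (p : P) :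
    ind (maxElems lt' J) p = if p ∈ maxElems lt' J then 1 else 0 := by
  simp [ind, Set.indicator_apply]

set_option maxHeartbeats 1000000 in
lemma chainRep (hweak : ∀ p q, lt' p q → lt p q)
    (hstar : ∀ J1 J2 : Set P, IsLowerIdeal lt J1 → IsLowerIdeal lt J2 →
      IsLowerIdeal lt (starOp lt' J1 J2))
    {x : P → ℝ} (hx : x ∈ RPP lt lt') :
    ∃ (s : Finset (Set P)) (c : Set P → ℝ),
      (∀ J ∈ s, IsLowerIdeal lt J) ∧ (∀ J ∈ s, 0 ≤ c J) ∧
      (∀ J ∈ s, ∀ K ∈ s, J ⊆ K ∨ K ⊆ J) ∧ (∑ J ∈ s, c J = 1) ∧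
      (∀ p, x p = ∑ J ∈ s, c J * (if p ∈ maxElems lt' J then 1 else 0)) := by
  set v : Set P → P → ℝ := fun J p => if p ∈ maxElems lt' J then 1 else 0 with hv
  set K : Set ((Set P) → ℝ) := {c | (∀ J, 0 ≤ c J) ∧ (∀ J, ¬ IsLowerIdeal lt J → c J = 0) ∧
      (∑ J : Set P, c J) = 1 ∧ ∀ p, (∑ J : Set P, c J * v J p) = x p} with hK
  -- K is nonempty
  have hKne : K.Nonempty := by
    rw [RPP, _root_.convexHull_eq] at hx
    obtain ⟨ι, t, w, z, hw0, hw1, hzV, hcm⟩ := hx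
    have hz : ∀ i ∈ t, ∃ J : Set P, IsLowerIdeal lt J ∧ z i = ind (maxElems lt' J) := hzV
    set g : ι → Set P := fun i => if hi : i ∈ t then (hz i hi).choose else ∅ with hg
    have hgid : ∀ i ∈ t, IsLowerIdeal lt (g i) := by
      intro i hi; rw [hg]; simp only [dif_pos hi]; exact (hz i hi).choose_spec.1
    have hgz : ∀ i ∈ t, z i = ind (maxElems lt' (g i)) := by
      intro i hi; rw [hg]; simp only [dif_pos hi]; exact (hz i hi).choose_spec.2
    refine ⟨fun J => ∑ i ∈ t.filter (fun i => g i = J), w i, ?_, ?_, ?_, ?_⟩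
    · intro J
      exact Finset.sum_nonneg fun i hi => hw0 i (Finset.mem_filter.mp hi).1
    · intro J hJ
      show (∑ i ∈ t.filter (fun i => g i = J), w i) = 0
      rw [Finset.filter_eq_empty_iff.mpr, Finset.sum_empty]
      intro i hi hgi
      exact hJ (hgi ▸ hgid i hi)
    · rw [Finset.sum_fiberwise_of_maps_to (fun i _ => Finset.mem_univ (g i)) w]
      exact hw1
    · intro p
      have : ∀ J : Set P, (∑ i ∈ t.filter (fun i => g i = J), w i) * v J p
          = ∑ i ∈ t.filter (fun i => g i = J), w i * z i p := by
        intro J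
        rw [Finset.sum_mul]
        refine Finset.sum_congr rfl fun i hi => ?_
        obtain ⟨hit, hgi⟩ := Finset.mem_filter.mp hi
        rw [hgz i hit, ← hgi, ind_apply]
      simp_rw [this]
      rw [Finset.sum_fiberwise_of_maps_to (fun i _ => Finset.mem_univ (g i))
        (fun i => w i * z i p)]
      rw [Finset.centerMass_eq_of_sum_1 t z hw1] at hcm
      calc ∑ i ∈ t, w i * z i p = (∑ i ∈ t, w i • z i) p := by
            rw [Finset.sum_apply]; rfl
        _ = x p := by rw [hcm]
  -- K is compact
  have hKcl : IsClosed K := by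
    have h1 : IsClosed {c : (Set P) → ℝ | ∀ J, 0 ≤ c J} := by
      rw [show {c : (Set P) → ℝ | ∀ J, 0 ≤ c J}
        = ⋂ J : Set P, {c | 0 ≤ c J} by ext c; simp]
      exact isClosed_iInter fun J => IsClosed.preimage (continuous_apply J) isClosed_Ici
    have h2 : IsClosed {c : (Set P) → ℝ | ∀ J, ¬ IsLowerIdeal lt J → c J = 0} := by
      rw [show {c : (Set P) → ℝ | ∀ J, ¬ IsLowerIdeal lt J → c J = 0}
        = ⋂ J : Set P, {c | ¬ IsLowerIdeal lt J → c J = 0} by ext c; simp]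
      refine isClosed_iInter fun J => ?_
      by_cases hJ : IsLowerIdeal lt J
      · simp [hJ]
      · simp only [hJ, not_false_iff, true_implies]
        exact IsClosed.preimage (continuous_apply J) isClosed_singleton
    have h3 : IsClosed {c : (Set P) → ℝ | (∑ J : Set P, c J) = 1} :=
      IsClosed.preimage (continuous_finset_sum _ fun J _ => continuous_apply J)
        isClosed_singleton
    have h4 : IsClosed {c : (Set P) → ℝ | ∀ p, (∑ J : Set P, c J * v J p) = x p} := by
      rw [show {c : (Set P) → ℝ | ∀ p, (∑ J : Set P, c J * v J p) = x p}
        = ⋂ p, {c | (∑ J : Set P, c J * v J p) = x p} by ext c; simp]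
      refine isClosed_iInter fun p => ?_
      exact IsClosed.preimage
        (continuous_finset_sum _ fun J _ => (continuous_apply J).mul continuous_const)
        isClosed_singleton
    rw [hK, show {c | (∀ J, 0 ≤ c J) ∧ (∀ J, ¬ IsLowerIdeal lt J → c J = 0) ∧
      (∑ J : Set P, c J) = 1 ∧ ∀ p, (∑ J : Set P, c J * v J p) = x p}
      = {c : (Set P) → ℝ | ∀ J, 0 ≤ c J} ∩ ({c | ∀ J, ¬ IsLowerIdeal lt J → c J = 0} ∩
        ({c | (∑ J : Set P, c J) = 1} ∩ {c | ∀ p, (∑ J : Set P, c J * v J p) = x p}))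
      from by ext c; simp [Set.mem_inter_iff, and_assoc]]
    exact h1.inter (h2.inter (h3.inter h4))
  have hKcp : IsCompact K := by
    refine IsCompact.of_isClosed_subset (isCompact_univ_pi (s := fun _ : Set P => Set.Icc (0:ℝ) 1) fun _ => isCompact_Icc) hKcl ?_
    intro c hc
    rw [Set.mem_univ_pi]
    intro J
    refine ⟨hc.1 J, ?_⟩
    calc c J ≤ ∑ J' : Set P, c J' :=
          Finset.single_le_sum (fun J' _ => hc.1 J') (Finset.mem_univ J)
      _ = 1 := hc.2.2.1
  -- maximize Φ
  set Φ : ((Set P) → ℝ) → ℝ := fun c => ∑ J : Set P, c J * (3:ℝ) ^ (J.ncard) with hΦ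
  have hΦc : Continuous Φ :=
    continuous_finset_sum _ fun J _ => (continuous_apply J).mul continuous_const
  obtain ⟨c, hcK, hmax⟩ := hKcp.exists_isMaxOn hKne hΦc.continuousOn
  -- support of c is a chain
  have hcomp : ∀ J, c J ≠ 0 → ∀ L, c L ≠ 0 → J ⊆ L ∨ L ⊆ J := by
    intro J hJ0 L hL0
    by_contra hcon
    push_neg at hcon
    obtain ⟨hJL, hLJ⟩ := hcon
    have hJid : IsLowerIdeal lt J := by
      by_contra hid; exact hJ0 (hcK.2.1 J hid)
    have hLid : IsLowerIdeal lt L := by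
      by_contra hid; exact hL0 (hcK.2.1 L hid)
    have hJpos : 0 < c J := lt_of_le_of_ne (hcK.1 J) (Ne.symm hJ0)
    have hLpos : 0 < c L := lt_of_le_of_ne (hcK.1 L) (Ne.symm hL0)
    set ε : ℝ := min (c J) (c L) with hε
    have hεpos : 0 < ε := lt_min hJpos hLpos
    set U : Set P := J ∪ L with hU
    set S : Set P := starOp lt' J L with hS
    have hUid : IsLowerIdeal lt U := isLowerIdeal_union hJid hLid
    have hSid : IsLowerIdeal lt S := hstar J L hJid hLid
    have hSJL : S ⊆ J ∩ L := starOp_subset hweak hJid hLid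
    have hUJ : U ≠ J := fun he => hLJ (he ▸ Set.subset_union_right)
    have hUL : U ≠ L := fun he => hJL (he ▸ Set.subset_union_left)
    have hSJ : S ≠ J := fun he => hJL (fun p hp => (hSJL (he ▸ hp)).2)
    have hSL : S ≠ L := fun he => hLJ (fun p hp => (hSJL (he ▸ hp)).1)
    have hSU : S ≠ U := by
      intro he
      exact hJL fun p hp => (hSJL (he ▸ (Set.subset_union_left (s := J) (t := L) hp))).2
    set c' : (Set P) → ℝ := fun M => c M + (if M = U then ε else 0) + (if M = S then ε else 0)
      - (if M = J then ε else 0) - (if M = L then ε else 0) with hc'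
    have hJL' : J ≠ L := fun he => hJL (he ▸ subset_rfl)
    have hc'K : c' ∈ K := by
      refine ⟨?_, ?_, ?_, ?_⟩
      · intro M
        simp only [hc']
        rcases eq_or_ne M J with rfl | hMJ
        · simp [hUJ.symm, hSJ.symm, hJL']
          have : ε ≤ c M := min_le_left _ _
          linarith
        · rcases eq_or_ne M L with rfl | hML
          · simp [hUL.symm, hSL.symm, hMJ]
            have : ε ≤ c M := min_le_right _ _
            linarith
          · simp only [if_neg hMJ, if_neg hML]
            have h0 : (0:ℝ) ≤ c M := hcK.1 M
            have h1 : (0:ℝ) ≤ if M = U then ε else 0 := by positivity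
            have h2 : (0:ℝ) ≤ if M = S then ε else 0 := by positivity
            linarith
      · intro M hM
        simp only [hc']
        have hMU : M ≠ U := fun he => hM (he ▸ hUid)
        have hMS : M ≠ S := fun he => hM (he ▸ hSid)
        have hMJ : M ≠ J := fun he => hM (he ▸ hJid)
        have hML : M ≠ L := fun he => hM (he ▸ hLid)
        rw [if_neg hMU, if_neg hMS, if_neg hMJ, if_neg hML, hcK.2.1 M hM]
        ring
      · simp only [hc']
        simp only [Finset.sum_sub_distrib, Finset.sum_add_distrib, Finset.sum_ite_eq',
          Finset.mem_univ, if_pos]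
        rw [hcK.2.2.1]
        ring
      · intro p
        simp only [hc']
        have expand : ∀ M : Set P,
            (c M + (if M = U then ε else 0) + (if M = S then ε else 0)
              - (if M = J then ε else 0) - (if M = L then ε else 0)) * v M p
            = c M * v M p + (if M = U then ε * v M p else 0) + (if M = S then ε * v M p else 0)
              - (if M = J then ε * v M p else 0) - (if M = L then ε * v M p else 0) := by
          intro M
          split_ifs <;> ring
        simp_rw [expand]
        simp only [Finset.sum_sub_distrib, Finset.sum_add_distrib, Finset.sum_ite_eq',
          Finset.mem_univ, if_pos]
        rw [hcK.2.2.2 p]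
        have hid := star_identity hweak hJid hLid p
        have hmul : ε * ((if p ∈ maxElems lt' J then (1:ℝ) else 0)
              + (if p ∈ maxElems lt' L then 1 else 0))
            = ε * ((if p ∈ maxElems lt' (J ∪ L) then 1 else 0)
              + (if p ∈ maxElems lt' (starOp lt' J L) then 1 else 0)) := by
          rw [hid]
        show (((x p + ε * if p ∈ maxElems lt' (J ∪ L) then 1 else 0)
            + ε * if p ∈ maxElems lt' (starOp lt' J L) then 1 else 0)
            - ε * if p ∈ maxElems lt' J then 1 else 0)
            - (ε * if p ∈ maxElems lt' L then 1 else 0) = x p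
        linarith [hmul]
    have hval : Φ c' = Φ c + ε * ((3:ℝ) ^ U.ncard + 3 ^ S.ncard - 3 ^ J.ncard - 3 ^ L.ncard) := by
      simp only [hΦ, hc']
      have expand : ∀ M : Set P,
          (c M + (if M = U then ε else 0) + (if M = S then ε else 0)
            - (if M = J then ε else 0) - (if M = L then ε else 0)) * (3:ℝ) ^ M.ncard
          = c M * 3 ^ M.ncard + (if M = U then ε * 3 ^ M.ncard else 0)
            + (if M = S then ε * 3 ^ M.ncard else 0)
            - (if M = J then ε * 3 ^ M.ncard else 0)
            - (if M = L then ε * 3 ^ M.ncard else 0) := by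
        intro M
        split_ifs <;> ring
      simp_rw [expand]
      simp only [Finset.sum_sub_distrib, Finset.sum_add_distrib, Finset.sum_ite_eq',
        Finset.mem_univ, if_pos]
      ring
    have hJU : J ⊂ U := ⟨Set.subset_union_left, fun hsub => hLJ fun p hp => hsub (Or.inr hp)⟩
    have hLU : L ⊂ U := ⟨Set.subset_union_right, fun hsub => hJL fun p hp => hsub (Or.inl hp)⟩
    have hJcard : J.ncard < U.ncard := Set.ncard_lt_ncard hJU (Set.toFinite U)
    have hLcard : L.ncard < U.ncard := Set.ncard_lt_ncard hLU (Set.toFinite U)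
    obtain ⟨n, hn⟩ : ∃ n, U.ncard = n + 1 :=
      ⟨U.ncard - 1, by omega⟩
    have hpowJ : (3:ℝ) ^ J.ncard ≤ 3 ^ n :=
      pow_le_pow_right₀ (by norm_num) (by omega)
    have hpowL : (3:ℝ) ^ L.ncard ≤ 3 ^ n :=
      pow_le_pow_right₀ (by norm_num) (by omega)
    have hpowU : (3:ℝ) ^ U.ncard = 3 * 3 ^ n := by rw [hn]; ring
    have hpowS : (0:ℝ) < 3 ^ S.ncard := by positivity
    have hpown : (0:ℝ) < 3 ^ n := by positivity
    have hgt : Φ c < Φ c' := by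
      rw [hval]
      have hX : (0:ℝ) < (3:ℝ) ^ U.ncard + 3 ^ S.ncard - 3 ^ J.ncard - 3 ^ L.ncard := by
        rw [hpowU]; linarith
      have := mul_pos hεpos hX
      linarith
    exact absurd (hmax hc'K) (not_le.mpr hgt)
  -- assemble
  refine ⟨Finset.univ.filter (fun J => c J ≠ 0), c, ?_, ?_, ?_, ?_, ?_⟩
  · intro J hJ
    have := (Finset.mem_filter.mp hJ).2
    by_contra hid
    exact this (hcK.2.1 J hid)
  · intro J _
    exact hcK.1 J
  · intro J hJ L hL
    exact hcomp J (Finset.mem_filter.mp hJ).2 L (Finset.mem_filter.mp hL).2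
  · rw [Finset.sum_filter_ne_zero]
    exact hcK.2.2.1
  · intro p
    rw [Finset.sum_filter_of_ne (fun J _ hne => by
      intro h0
      exact hne (by rw [h0, zero_mul]))]
    exact (hcK.2.2.2 p).symm

end HibiLiD

section HibiLiE

open Classical Finset

variable {P : Type*} [Fintype P] {lt lt' : P → P → Prop}

lemma list_sum_fin {α M : Type*} [AddCommMonoid M] (l : List α) (f : α → M) :
    ∑ i : Fin l.length, f (l.get i) = (l.map f).sum := by
  induction l with
  | nil => simp
  | cons a l ih =>
    rw [List.map_cons, List.sum_cons, ← ih]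
    rw [show (∑ i : Fin (a :: l).length, f ((a :: l).get i))
      = ∑ i : Fin (l.length + 1), f ((a :: l).get i) from rfl, Fin.sum_univ_succ]
    rfl

variable (h : WellFounded fun a b : P => lt' b a) (y : P → ℤ)

lemma tf_chain (hy : ∀ p, 0 ≤ y p) (p : P) :
    ∃ l : List P, l ≠ [] ∧ l.head? = some p ∧ List.Chain' lt' l ∧
      (l.map y).sum = tf lt' h y p := by
  induction p using WellFounded.induction h with
  | _ p IH =>
  obtain ⟨-, h2⟩ := tf_cases h y hy p
  rcases h2 with he | ⟨q, hq, he⟩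
  · exact ⟨[p], by simp, by simp, List.isChain_singleton p, by simp [he.symm]⟩
  · obtain ⟨l, hne, hhead, hchain, hsum⟩ := IH q hq
    refine ⟨p :: l, by simp, by simp, ?_, ?_⟩
    · rw [show List.Chain' lt' (p :: l) ↔ List.IsChain lt' (p :: l) from Iff.rfl, List.isChain_cons]
      refine ⟨fun y' hy' => ?_, hchain⟩
      rw [hhead, Option.mem_some_iff] at hy'
      rw [← hy']
      exact hq
    · rw [List.map_cons, List.sum_cons, hsum, ← he]

/-- In the situation of a point of `m ·(chain polytope of lt')`, the transfer is bounded by m. -/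
lemma tf_le_of_cp (htr : ∀ a b c, lt' a b → lt' b c → lt' a c)
    (hy : ∀ p, 0 ≤ y p) (m : ℕ) (x' : P → ℝ) (hx' : x' ∈ chainPolytope lt')
    (hxy : ∀ p, (y p : ℝ) = (m:ℝ) * x' p) (p : P) :
    tf lt' h y p ≤ (m:ℤ) := by
  obtain ⟨l, hne, hhead, hchain, hsum⟩ := tf_chain h y hy p
  letI : IsTrans P lt' := ⟨fun a b c => htr a b c⟩
  have hpair : List.Pairwise lt' l := List.isChain_iff_pairwise.mp hchain
  have hget : ∀ i j : Fin l.length, i < j → lt' (l.get i) (l.get j) :=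
    List.pairwise_iff_get.mp hpair
  have hcp := hx'.2 l.length (fun i => l.get i) hget
  have hsum2 : ∑ i : Fin l.length, x' (l.get i) ≤ 1 := hcp
  have key : ((tf lt' h y p : ℤ) : ℝ) = (m:ℝ) * ∑ i : Fin l.length, x' (l.get i) := by
    rw [← hsum]
    rw [← list_sum_fin l y]
    push_cast
    rw [Finset.mul_sum]
    exact Finset.sum_congr rfl fun i _ => hxy (l.get i)
  have hble : ((tf lt' h y p : ℤ) : ℝ) ≤ (m:ℝ) := by
    rw [key]
    calc (m:ℝ) * ∑ i : Fin l.length, x' (l.get i) ≤ (m:ℝ) * 1 :=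
          mul_le_mul_of_nonneg_left hsum2 (by positivity)
      _ = m := mul_one _
  exact_mod_cast hble

lemma count_nested (m : ℕ) (J : ℕ → Set P) (hnest : ∀ i j, i ≤ j → J j ⊆ J i)
    (hempty : ∀ i, m < i → J i = ∅) (p : P) (i : ℕ) (hi : 1 ≤ i) :
    (i ≤ ((Finset.Icc 1 m).filter (fun j => p ∈ J j)).card) ↔ p ∈ J i := by
  constructor
  · intro hcard
    by_contra hp
    have hsub : (Finset.Icc 1 m).filter (fun j => p ∈ J j) ⊆ Finset.Icc 1 (i-1) := by
      intro j hj
      obtain ⟨hj1, hj2⟩ := Finset.mem_filter.mp hj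
      rw [Finset.mem_Icc] at hj1 ⊢
      refine ⟨hj1.1, ?_⟩
      by_contra hij
      exact hp (hnest i j (by omega) hj2)
    have := Finset.card_le_card hsub
    rw [Nat.card_Icc] at this
    omega
  · intro hp
    have him : i ≤ m := by
      by_contra him
      rw [hempty i (by omega)] at hp
      exact hp
    have hsub : Finset.Icc 1 i ⊆ (Finset.Icc 1 m).filter (fun j => p ∈ J j) := by
      intro j hj
      rw [Finset.mem_Icc] at hj
      exact Finset.mem_filter.mpr ⟨Finset.mem_Icc.mpr ⟨hj.1, by omega⟩, hnest j i hj.2 hp⟩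
    have := Finset.card_le_card hsub
    rw [Nat.card_Icc] at this
    omega

lemma tf_count (hweak' : ∀ p q, lt' p q → lt p q)
    (J : ℕ → Set P) (hid : ∀ i, IsLowerIdeal lt (J i))
    (hnest : ∀ i j, i ≤ j → J j ⊆ J i) (m : ℕ)
    (hdef : ∀ p, y p = ∑ i ∈ Finset.Icc 1 m, (if p ∈ maxElems lt' (J i) then (1:ℤ) else 0))
    (p : P) :
    tf lt' h y p = (((Finset.Icc 1 m).filter (fun i => p ∈ J i)).card : ℤ) := by
  have hy : ∀ p, 0 ≤ y p := by
    intro p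
    rw [hdef p]
    exact Finset.sum_nonneg fun i _ => by positivity
  have hrep : ∀ p, (y p : ℝ) = ∑ i ∈ Finset.Icc 1 m,
      (fun _ : ℕ => (1:ℝ)) i * (if p ∈ maxElems lt' (J i) then (1:ℝ) else 0) := by
    intro p
    rw [hdef p]
    push_cast
    refine Finset.sum_congr rfl fun i _ => ?_
    split_ifs <;> norm_num
  have hle := tf_le_sum h y hy hweak' (Finset.Icc 1 m) (fun _ => (1:ℝ))
    (fun i _ => zero_le_one) J (fun i _ => hid i) hrep p
  have hge := sum_le_tf h y hy hweak' (Finset.Icc 1 m) (fun _ => (1:ℝ))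
    (fun i _ => zero_le_one) J (fun i _ => hid i)
    (fun i _ j _ => (le_total i j).elim (fun hij => Or.inr (hnest i j hij))
      (fun hij => Or.inl (hnest j i hij))) hrep p
  have hsum : ∑ i ∈ (Finset.Icc 1 m).filter (fun i => p ∈ J i), (fun _ : ℕ => (1:ℝ)) i
      = (((Finset.Icc 1 m).filter (fun i => p ∈ J i)).card : ℝ) := by
    simp
  rw [hsum] at hle hge
  have : ((tf lt' h y p : ℤ) : ℝ) = (((Finset.Icc 1 m).filter (fun i => p ∈ J i)).card : ℝ) :=
    le_antisymm hle hge
  exact_mod_cast this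

lemma chain_count_le (m : ℕ) (J : ℕ → Set P) {k : ℕ} (c : Fin k → P)
    (hc : ∀ i j : Fin k, i < j → lt' (c i) (c j)) :
    ∑ j : Fin k, (∑ i ∈ Finset.Icc 1 m, (if c j ∈ maxElems lt' (J i) then (1:ℤ) else 0))
      ≤ (m:ℤ) := by
  rw [Finset.sum_comm]
  calc ∑ i ∈ Finset.Icc 1 m, ∑ j : Fin k, (if c j ∈ maxElems lt' (J i) then (1:ℤ) else 0)
      ≤ ∑ _i ∈ Finset.Icc 1 m, (1:ℤ) := by
        refine Finset.sum_le_sum fun i _ => ?_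
        rw [Finset.sum_boole]
        have hcard : (Finset.univ.filter (fun j => c j ∈ maxElems lt' (J i))).card ≤ 1 := by
          refine Finset.card_le_one.mpr fun a ha b hb => ?_
          have hca := (Finset.mem_filter.mp ha).2
          have hcb := (Finset.mem_filter.mp hb).2
          rcases lt_trichotomy a b with hab | hab | hab
          · exact absurd (hc a b hab) (hca.2 (c b) hcb.1)
          · exact hab
          · exact absurd (hc b a hab) (hcb.2 (c a) hca.1)
        exact_mod_cast hcard
    _ = (m:ℤ) := by simp

end HibiLiE

section HibiLiF

open Classical Finset

variable {P : Type*} [Fintype P]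

def MCh (lt : P → P → Prop) (m : ℕ) : Type _ :=
  {J : ℕ → Set P // (∀ i, IsLowerIdeal lt (J i)) ∧ (∀ i j : ℕ, i ≤ j → J j ⊆ J i) ∧
    (∀ i : ℕ, m < i → J i = ∅) ∧ J 0 = Set.univ}

lemma card_O (lt : P → P → Prop) (m : ℕ) :
    Nat.card {x : P → ℤ // (fun p => (x p : ℝ)) ∈ dilate m (orderPolytope lt)}
      = Nat.card (MCh lt m) := by
  have props : ∀ x : P → ℤ, ((fun p => (x p : ℝ)) ∈ dilate m (orderPolytope lt)) →
      (∀ p, 0 ≤ x p) ∧ (∀ p, x p ≤ (m:ℤ)) ∧ (∀ p q, lt p q → x q ≤ x p) := by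
    intro x hx
    obtain ⟨x₀, hx₀, hmx⟩ := hx
    have hxp : ∀ p, (x p : ℝ) = (m:ℝ) * x₀ p := by
      intro p
      have := congrFun hmx p
      simpa [Pi.smul_apply, smul_eq_mul] using this.symm
    refine ⟨?_, ?_, ?_⟩
    · intro p
      have : (0:ℝ) ≤ (x p : ℝ) := by
        rw [hxp p]; exact mul_nonneg (by positivity) (hx₀.1 p).1
      exact_mod_cast this
    · intro p
      have : (x p : ℝ) ≤ (m:ℝ) := by
        rw [hxp p]
        calc (m:ℝ) * x₀ p ≤ (m:ℝ) * 1 := mul_le_mul_of_nonneg_left (hx₀.1 p).2 (by positivity)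
          _ = m := mul_one _
      exact_mod_cast this
    · intro p q hpq
      have : (x q : ℝ) ≤ (x p : ℝ) := by
        rw [hxp p, hxp q]
        exact mul_le_mul_of_nonneg_left (hx₀.2 q p hpq) (by positivity)
      exact_mod_cast this
  refine Nat.card_congr (Equiv.mk ?_ ?_ ?_ ?_)
  · -- toFun
    refine fun x => ⟨fun i => {p | (i:ℤ) ≤ x.1 p}, ?_, ?_, ?_, ?_⟩
    · intro i p q hpq hq
      exact le_trans hq ((props x.1 x.2).2.2 p q hpq)
    · intro i j hij p hp
      simp only [Set.mem_setOf_eq] at hp ⊢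
      omega
    · intro i hi
      rw [Set.eq_empty_iff_forall_notMem]
      intro p hp
      simp only [Set.mem_setOf_eq] at hp
      have := (props x.1 x.2).2.1 p
      omega
    · rw [Set.eq_univ_iff_forall]
      intro p
      simpa using (props x.1 x.2).1 p
  · -- invFun
    refine fun J => ⟨fun p => ∑ i ∈ Finset.Icc 1 m, (if p ∈ J.1 i then (1:ℤ) else 0), ?_⟩
    have hval : ∀ p, (∑ i ∈ Finset.Icc 1 m, (if p ∈ J.1 i then (1:ℤ) else 0))
        = (((Finset.Icc 1 m).filter (fun i => p ∈ J.1 i)).card : ℤ) := by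
      intro p; rw [Finset.sum_boole]
    rcases Nat.eq_zero_or_pos m with rfl | hm
    · refine ⟨0, ?_, ?_⟩
      · exact ⟨fun p => ⟨le_refl 0, zero_le_one⟩, fun p q _ => le_refl 0⟩
      · funext p
        simp
    · refine ⟨fun p => ((∑ i ∈ Finset.Icc 1 m, (if p ∈ J.1 i then (1:ℤ) else 0) : ℤ) : ℝ) / m,
        ⟨?_, ?_⟩, ?_⟩
      · intro p
        beta_reduce
        rw [hval p]
        constructor
        · positivity
        · rw [div_le_one (by exact_mod_cast hm)]
          have : ((Finset.Icc 1 m).filter (fun i => p ∈ J.1 i)).card ≤ m := by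
            calc ((Finset.Icc 1 m).filter (fun i => p ∈ J.1 i)).card
                ≤ (Finset.Icc 1 m).card := Finset.card_le_card (Finset.filter_subset _ _)
              _ = m := by rw [Nat.card_Icc]; omega
          exact_mod_cast this
      · intro p q hqp
        have hsub : (Finset.Icc 1 m).filter (fun i => p ∈ J.1 i)
            ⊆ (Finset.Icc 1 m).filter (fun i => q ∈ J.1 i) := by
          intro i hi
          obtain ⟨h1, h2⟩ := Finset.mem_filter.mp hi
          exact Finset.mem_filter.mpr ⟨h1, J.2.1 i hqp h2⟩
        beta_reduce
        rw [hval p, hval q]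
        have := Finset.card_le_card hsub
        have hmpos : (0:ℝ) < m := by exact_mod_cast hm
        have hcast : ((((Finset.Icc 1 m).filter (fun i => p ∈ J.1 i)).card : ℤ) : ℝ)
            ≤ ((((Finset.Icc 1 m).filter (fun i => q ∈ J.1 i)).card : ℤ) : ℝ) := by
          exact_mod_cast this
        gcongr
      · funext p
        have hmne : (m:ℝ) ≠ 0 := by positivity
        simp only [Pi.smul_apply, smul_eq_mul]
        field_simp
  · -- left inverse
    intro x
    refine Subtype.ext (funext fun p => ?_)
    have h0 := (props x.1 x.2).1 p
    have h1 := (props x.1 x.2).2.1 p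
    dsimp only
    have hcalc : (∑ i ∈ Finset.Icc 1 m, if (i:ℤ) ≤ x.1 p then (1:ℤ) else 0) = x.1 p := by
      rw [Finset.sum_boole]
      have key : (Finset.Icc 1 m).filter (fun i : ℕ => (i:ℤ) ≤ x.1 p)
          = Finset.Icc 1 (x.1 p).toNat := by
        ext i
        simp only [Finset.mem_filter, Finset.mem_Icc]
        omega
      rw [key, Nat.card_Icc]
      omega
    refine Finset.sum_congr rfl (fun i _ => ?_) |>.trans hcalc
    by_cases hc : (i:ℤ) ≤ x.1 p <;> simp [Set.mem_setOf_eq, hc]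
  · -- right inverse
    intro J
    refine Subtype.ext (funext fun i => ?_)
    dsimp only
    show {p | (i:ℤ) ≤ ∑ j ∈ Finset.Icc 1 m, (if p ∈ J.1 j then (1:ℤ) else 0)} = J.1 i
    rcases Nat.eq_zero_or_pos i with rfl | hi
    · rw [J.2.2.2.2, Set.eq_univ_iff_forall]
      intro p
      simp only [Set.mem_setOf_eq]
      exact Finset.sum_nonneg fun j _ => by positivity
    · ext p
      simp only [Set.mem_setOf_eq]
      rw [Finset.sum_boole]
      rw [show ((i:ℤ) ≤ (((Finset.Icc 1 m).filter (fun j => p ∈ J.1 j)).card : ℤ))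
        ↔ i ≤ ((Finset.Icc 1 m).filter (fun j => p ∈ J.1 j)).card by exact_mod_cast Iff.rfl]
      exact count_nested m J.1 J.2.2.1 J.2.2.2.1 p i hi

end HibiLiF

section HibiLiF2

open Classical Finset

variable {P : Type*} [Fintype P]

lemma card_C (lt : P → P → Prop) (hltirr : ∀ p, ¬ lt p p)
    (hlttr : ∀ a b c, lt a b → lt b c → lt a c) (m : ℕ) :
    Nat.card {x : P → ℤ // (fun p => (x p : ℝ)) ∈ dilate m (chainPolytope lt)}
      = Nat.card (MCh lt m) := by
  have hwf : WellFounded fun a b : P => lt b a := wfUp hltirr hlttr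
  have props : ∀ x : P → ℤ, ((fun p => (x p : ℝ)) ∈ dilate m (chainPolytope lt)) →
      (∀ p, 0 ≤ x p) ∧ (∀ p, tf lt hwf x p ≤ (m:ℤ)) := by
    intro x hx
    obtain ⟨x₀, hx₀, hmx⟩ := hx
    have hxp : ∀ p, (x p : ℝ) = (m:ℝ) * x₀ p := by
      intro p
      have := congrFun hmx p
      simpa [Pi.smul_apply, smul_eq_mul] using this.symm
    have hy : ∀ p, 0 ≤ x p := by
      intro p
      have : (0:ℝ) ≤ (x p : ℝ) := by
        rw [hxp p]; exact mul_nonneg (by positivity) (hx₀.1 p)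
      exact_mod_cast this
    exact ⟨hy, fun p => tf_le_of_cp hwf x hlttr hy m x₀ hx₀ hxp p⟩
  have hmono : ∀ (x : P → ℤ), (∀ p, 0 ≤ x p) →
      ∀ p q, lt p q → tf lt hwf x q ≤ tf lt hwf x p := by
    intro x hy p q hpq
    have h1 := tf_succ hwf x hy hpq
    have h2 := hy p
    omega
  refine Nat.card_congr (Equiv.mk ?_ ?_ ?_ ?_)
  · refine fun x => ⟨fun i => {p | (i:ℤ) ≤ tf lt hwf x.1 p}, ?_, ?_, ?_, ?_⟩
    · intro i p q hpq hq
      exact le_trans hq (hmono x.1 (props x.1 x.2).1 p q hpq)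
    · intro i j hij p hp
      simp only [Set.mem_setOf_eq] at hp ⊢
      omega
    · intro i hi
      rw [Set.eq_empty_iff_forall_notMem]
      intro p hp
      simp only [Set.mem_setOf_eq] at hp
      have := (props x.1 x.2).2 p
      omega
    · rw [Set.eq_univ_iff_forall]
      intro p
      simpa using tf_nonneg hwf x.1 (props x.1 x.2).1 p
  · refine fun J => ⟨fun p => ∑ i ∈ Finset.Icc 1 m,
      (if p ∈ maxElems lt (J.1 i) then (1:ℤ) else 0), ?_⟩
    have hynn : ∀ p, (0:ℤ) ≤ ∑ i ∈ Finset.Icc 1 m,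
        (if p ∈ maxElems lt (J.1 i) then (1:ℤ) else 0) :=
      fun p => Finset.sum_nonneg fun i _ => by positivity
    rcases Nat.eq_zero_or_pos m with rfl | hm
    · refine ⟨0, ⟨fun p => le_refl 0, fun k c hc => by simp⟩, ?_⟩
      funext p
      simp
    · have hmne : (m:ℝ) ≠ 0 := by positivity
      refine ⟨fun p => ((∑ i ∈ Finset.Icc 1 m,
        (if p ∈ maxElems lt (J.1 i) then (1:ℤ) else 0) : ℤ) : ℝ) / m, ⟨?_, ?_⟩, ?_⟩
      · intro p
        exact div_nonneg (by exact_mod_cast hynn p) (by positivity)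
      · intro k c hc
        have hle := chain_count_le m J.1 c hc
        rw [← Finset.sum_div, div_le_one (by exact_mod_cast hm)]
        have : ((∑ j : Fin k, ∑ i ∈ Finset.Icc 1 m,
            (if c j ∈ maxElems lt (J.1 i) then (1:ℤ) else 0) : ℤ) : ℝ) ≤ ((m:ℤ):ℝ) := by
          exact_mod_cast hle
        push_cast at this ⊢
        exact this
      · funext p
        show (m:ℝ) * (((∑ i ∈ Finset.Icc 1 m,
          (if p ∈ maxElems lt (J.1 i) then (1:ℤ) else 0) : ℤ) : ℝ) / m) = _
        field_simp
  · intro x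
    refine Subtype.ext (funext fun p => ?_)
    dsimp only
    exact (decomp hwf x.1 (props x.1 x.2).1 m (props x.1 x.2).2 p).symm
  · intro J
    refine Subtype.ext (funext fun i => ?_)
    dsimp only
    have hcnt := tf_count hwf
      (fun p => ∑ i ∈ Finset.Icc 1 m, (if p ∈ maxElems lt (J.1 i) then (1:ℤ) else 0))
      (fun p q hpq => hpq) J.1 J.2.1 J.2.2.1 m (fun p => rfl)
    rcases Nat.eq_zero_or_pos i with rfl | hi
    · rw [J.2.2.2.2, Set.eq_univ_iff_forall]
      intro p
      simp only [Set.mem_setOf_eq]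
      exact tf_nonneg hwf _ (fun p => Finset.sum_nonneg fun i _ => by positivity) p
    · ext p
      simp only [Set.mem_setOf_eq]
      rw [hcnt p]
      rw [show ((i:ℤ) ≤ ((((Finset.Icc 1 m).filter (fun j => p ∈ J.1 j)).card : ℕ) : ℤ))
        ↔ i ≤ (((Finset.Icc 1 m).filter (fun j => p ∈ J.1 j)).card : ℕ) by exact_mod_cast Iff.rfl]
      exact count_nested m J.1 J.2.2.1 J.2.2.2.1 p i hi

end HibiLiF2

section HibiLiF3

open Classical Finset

variable {P : Type*} [Fintype P]

lemma card_R (lt lt' : P → P → Prop)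
    (hlt'irr : ∀ p, ¬ lt' p p) (hlt'tr : ∀ a b c, lt' a b → lt' b c → lt' a c)
    (hweak : ∀ p q, lt' p q → lt p q)
    (hstar : ∀ J1 J2 : Set P, IsLowerIdeal lt J1 → IsLowerIdeal lt J2 →
      IsLowerIdeal lt (starOp lt' J1 J2)) (m : ℕ) :
    Nat.card {x : P → ℤ // (fun p => (x p : ℝ)) ∈ dilate m (RPP lt lt')}
      = Nat.card (MCh lt m) := by
  have hwf : WellFounded fun a b : P => lt' b a := wfUp hlt'irr hlt'tr
  have props : ∀ x : P → ℤ, ((fun p => (x p : ℝ)) ∈ dilate m (RPP lt lt')) →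
      (∀ p, 0 ≤ x p) ∧ (∀ p, tf lt' hwf x p ≤ (m:ℤ)) ∧
      (∀ p q, lt p q → tf lt' hwf x q ≤ tf lt' hwf x p) := by
    intro x hx
    obtain ⟨x₀, hx₀, hmx⟩ := hx
    obtain ⟨s, c, hsid, hsnn, hscomp, hssum, hsrep⟩ := chainRep hweak hstar hx₀
    have hxp : ∀ p, (x p : ℝ) = (m:ℝ) * x₀ p := by
      intro p
      have := congrFun hmx p
      simpa [Pi.smul_apply, smul_eq_mul] using this.symm
    set c' : Set P → ℝ := fun J => (m:ℝ) * c J with hc'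
    have hnn' : ∀ J ∈ s, 0 ≤ c' J := fun J hJ => mul_nonneg (by positivity) (hsnn J hJ)
    have hrep : ∀ p, ((x p : ℤ) : ℝ)
        = ∑ J ∈ s, c' J * (if p ∈ maxElems lt' J then (1:ℝ) else 0) := by
      intro p
      rw [hxp p, hsrep p, Finset.mul_sum]
      exact Finset.sum_congr rfl fun J _ => by rw [hc']; ring
    have hy : ∀ p, 0 ≤ x p := by
      intro p
      have : (0:ℝ) ≤ ((x p : ℤ) : ℝ) := by
        rw [hrep p]
        exact Finset.sum_nonneg fun J hJ => mul_nonneg (hnn' J hJ) (by positivity)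
      exact_mod_cast this
    have hsum' : ∑ J ∈ s, c' J = (m:ℝ) := by
      rw [hc', ← Finset.mul_sum, hssum, mul_one]
    have htf : ∀ p, tf lt' hwf x p ≤ (m:ℤ) := by
      intro p
      have h1 := tf_le_sum hwf x hy hweak s c' hnn' (fun J => J) hsid hrep p
      have h2 : ∑ J ∈ s.filter (fun J => p ∈ J), c' J ≤ ∑ J ∈ s, c' J :=
        Finset.sum_le_sum_of_subset_of_nonneg (Finset.filter_subset _ _)
          (fun J hJ _ => hnn' J hJ)
      have : ((tf lt' hwf x p : ℤ) : ℝ) ≤ (m:ℝ) := le_trans h1 (le_of_le_of_eq h2 hsum')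
      exact_mod_cast this
    have hmono : ∀ p q, lt p q → tf lt' hwf x q ≤ tf lt' hwf x p := by
      intro p q hpq
      have h1 := tf_le_sum hwf x hy hweak s c' hnn' (fun J => J) hsid hrep q
      have h2 := sum_le_tf hwf x hy hweak s c' hnn' (fun J => J) hsid hscomp hrep p
      have hsub : s.filter (fun J => q ∈ J) ⊆ s.filter (fun J => p ∈ J) := by
        intro J hJ
        obtain ⟨h3, h4⟩ := Finset.mem_filter.mp hJ
        exact Finset.mem_filter.mpr ⟨h3, hsid J h3 hpq h4⟩
      have h3 : ∑ J ∈ s.filter (fun J => q ∈ J), c' J ≤ ∑ J ∈ s.filter (fun J => p ∈ J), c' J :=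
        Finset.sum_le_sum_of_subset_of_nonneg hsub
          (fun J hJ _ => hnn' J (Finset.mem_filter.mp hJ).1)
      have : ((tf lt' hwf x q : ℤ) : ℝ) ≤ ((tf lt' hwf x p : ℤ) : ℝ) :=
        le_trans h1 (le_trans h3 h2)
      exact_mod_cast this
    exact ⟨hy, htf, hmono⟩
  refine Nat.card_congr (Equiv.mk ?_ ?_ ?_ ?_)
  · refine fun x => ⟨fun i => {p | (i:ℤ) ≤ tf lt' hwf x.1 p}, ?_, ?_, ?_, ?_⟩
    · intro i p q hpq hq
      exact le_trans hq ((props x.1 x.2).2.2 p q hpq)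
    · intro i j hij p hp
      simp only [Set.mem_setOf_eq] at hp ⊢
      omega
    · intro i hi
      rw [Set.eq_empty_iff_forall_notMem]
      intro p hp
      simp only [Set.mem_setOf_eq] at hp
      have := (props x.1 x.2).2.1 p
      omega
    · rw [Set.eq_univ_iff_forall]
      intro p
      simpa using tf_nonneg hwf x.1 (props x.1 x.2).1 p
  · refine fun J => ⟨fun p => ∑ i ∈ Finset.Icc 1 m,
      (if p ∈ maxElems lt' (J.1 i) then (1:ℤ) else 0), ?_⟩
    rcases Nat.eq_zero_or_pos m with rfl | hm
    · refine ⟨ind (maxElems lt' (∅ : Set P)), ?_, ?_⟩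
      · exact subset_convexHull ℝ _ ⟨∅, fun p q _ hq => absurd hq (Set.notMem_empty q), rfl⟩
      · funext p
        simp [ind]
    · have hmne : (m:ℝ) ≠ 0 := by positivity
      set z : ℕ → P → ℝ := fun i => ind (maxElems lt' (J.1 i)) with hz
      have hsum1 : ∑ _i ∈ Finset.Icc 1 m, (1:ℝ)/m = 1 := by
        rw [Finset.sum_const, Nat.card_Icc]
        simp only [nsmul_eq_mul]
        rw [show m + 1 - 1 = m by omega]
        field_simp
      refine ⟨(Finset.Icc 1 m).centerMass (fun _ => (1:ℝ)/m) z, ?_, ?_⟩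
      · refine Finset.centerMass_mem_convexHull _ (fun i _ => by positivity)
          (by rw [hsum1]; norm_num) (fun i _ => ?_)
        exact ⟨J.1 i, J.2.1 i, rfl⟩
      · rw [Finset.centerMass_eq_of_sum_1 _ z hsum1]
        funext p
        show (m:ℝ) • (∑ i ∈ Finset.Icc 1 m, ((1:ℝ)/m) • z i) p = _
        rw [Finset.sum_apply, smul_eq_mul, Finset.mul_sum]
        have hterm : ∀ i ∈ Finset.Icc 1 m, (m:ℝ) * (((1:ℝ)/m) • z i) p
            = (if p ∈ maxElems lt' (J.1 i) then (1:ℝ) else 0) := by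
          intro i _
          rw [Pi.smul_apply, smul_eq_mul]
          have hzi : z i p = (if p ∈ maxElems lt' (J.1 i) then (1:ℝ) else 0) := ind_apply _ p
          rw [hzi]
          field_simp
        rw [Finset.sum_congr rfl hterm]
        push_cast
        rfl
  · intro x
    refine Subtype.ext (funext fun p => ?_)
    dsimp only
    exact (decomp hwf x.1 (props x.1 x.2).1 m (props x.1 x.2).2.1 p).symm
  · intro J
    refine Subtype.ext (funext fun i => ?_)
    dsimp only
    have hcnt := tf_count hwf
      (fun p => ∑ i ∈ Finset.Icc 1 m, (if p ∈ maxElems lt' (J.1 i) then (1:ℤ) else 0))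
      hweak J.1 J.2.1 J.2.2.1 m (fun p => rfl)
    rcases Nat.eq_zero_or_pos i with rfl | hi
    · rw [J.2.2.2.2, Set.eq_univ_iff_forall]
      intro p
      simp only [Set.mem_setOf_eq]
      exact tf_nonneg hwf _ (fun p => Finset.sum_nonneg fun i _ => by positivity) p
    · ext p
      simp only [Set.mem_setOf_eq]
      rw [hcnt p]
      rw [show ((i:ℤ) ≤ ((((Finset.Icc 1 m).filter (fun j => p ∈ J.1 j)).card : ℕ) : ℤ))
        ↔ i ≤ (((Finset.Icc 1 m).filter (fun j => p ∈ J.1 j)).card : ℕ) by exact_mod_cast Iff.rfl]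
      exact count_nested m J.1 J.2.2.1 J.2.2.2.1 p i hi

end HibiLiF3

/-- `R(P, lt, lt')` is Ehrhart-equivalent to both the order polytope `O(P, lt)` and the
chain polytope `C(P, lt)`: for every `m ≥ 0` the three dilations have the same number of
integer points. -/
theorem stmt6 {P : Type*} [Fintype P] (lt lt' : P → P → Prop)
    (hltirr : ∀ p, ¬ lt p p) (hlttr : ∀ a b c, lt a b → lt b c → lt a c)
    (hlt'irr : ∀ p, ¬ lt' p p) (hlt'tr : ∀ a b c, lt' a b → lt' b c → lt' a c)
    (hweak : ∀ p q, lt' p q → lt p q)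
    (hstar : ∀ J1 J2 : Set P, IsLowerIdeal lt J1 → IsLowerIdeal lt J2 →
      IsLowerIdeal lt (starOp lt' J1 J2))
    (m : ℕ) :
    Nat.card {x : P → ℤ // (fun p => (x p : ℝ)) ∈ dilate m (RPP lt lt')} =
      Nat.card {x : P → ℤ // (fun p => (x p : ℝ)) ∈ dilate m (orderPolytope lt)} ∧
    Nat.card {x : P → ℤ // (fun p => (x p : ℝ)) ∈ dilate m (RPP lt lt')} =
      Nat.card {x : P → ℤ // (fun p => (x p : ℝ)) ∈ dilate m (chainPolytope lt)} := by
  constructor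
  · rw [card_R lt lt' hlt'irr hlt'tr hweak hstar m, card_O lt m]
  · rw [card_R lt lt' hlt'irr hlt'tr hweak hstar m, card_C lt hltirr hlttr m]
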